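/- Let B be a finite set of source elements of a set Y and let u, v ∈ Y with B_u ∩ B_v = ∅. Then either δ(x) ≤ δ(y) for all δ ∈ B, all x ∈ B_u and all y ∈ B_v, or δ(y) ≤ δ(x) for all δ ∈ B, all x ∈ B_u and all y ∈ B_v; in particular there cannot exist δ, γ ∈ B and x, x' ∈ B_u, y, y' ∈ B_v with δ(x) < δ(y) and γ(y') < γ(x'). -/
import Mathlib


/-- A source element of `Y`: values in `[0,1]`, finite support, total weight at most 1. -/
def IsSourceElem {Y : Type*} (β : Y → ℝ) : Prop :=
  (∀ y, 0 ≤ β y ∧ β y ≤ 1) ∧ (Function.support β).Finite ∧ ∑ᶠ y, β y ≤ 1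

/-- The strict preference step of `B`: `u ⊲_δ v` (i.e. `δ u < δ v`) for some `δ ∈ B`. -/
def LtRel {Y : Type*} (B : Set (Y → ℝ)) (u v : Y) : Prop :=
  ∃ δ ∈ B, δ u < δ v

/-- The consistency class of `B` at `y`: `{y}` together with all `u` lying in a common
`⊲`-cycle with `y` in `B`. -/
def consClass {Y : Type*} (B : Set (Y → ℝ)) (y : Y) : Set Y :=
  {y} ∪ {u | Relation.TransGen (LtRel B) u y ∧ Relation.TransGen (LtRel B) y u}

/-- If the consistency classes `B_u` and `B_v` are disjoint, then either every `δ ∈ B`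
puts all of `B_u` at most as high as all of `B_v`, or vice versa; in particular there
cannot be `δ, γ ∈ B` and points of `B_u`, `B_v` compared strictly in opposite ways. -/
theorem consClass_disjoint_ordered {Y : Type*} (B : Set (Y → ℝ))
    (hfin : B.Finite) (hsrc : ∀ β ∈ B, IsSourceElem β)
    (u v : Y) (hdisj : consClass B u ∩ consClass B v = ∅) :
    ((∀ δ ∈ B, ∀ x ∈ consClass B u, ∀ y ∈ consClass B v, δ x ≤ δ y) ∨
     (∀ δ ∈ B, ∀ x ∈ consClass B u, ∀ y ∈ consClass B v, δ y ≤ δ x)) ∧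
    ¬ ∃ δ ∈ B, ∃ γ ∈ B, ∃ x ∈ consClass B u, ∃ x' ∈ consClass B u,
        ∃ y ∈ consClass B v, ∃ y' ∈ consClass B v, δ x < δ y ∧ γ y' < γ x' := by
  have rts : ∀ {a b : Y}, a ∈ consClass B b →
      Relation.ReflTransGen (LtRel B) b a ∧ Relation.ReflTransGen (LtRel B) a b := by
    rintro a b (rfl | ⟨h1, h2⟩)
    · exact ⟨.refl, .refl⟩
    · exact ⟨h2.to_reflTransGen, h1.to_reflTransGen⟩
  have key : ¬ ∃ δ ∈ B, ∃ γ ∈ B, ∃ x ∈ consClass B u, ∃ x' ∈ consClass B u,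
      ∃ y ∈ consClass B v, ∃ y' ∈ consClass B v, δ x < δ y ∧ γ y' < γ x' := by
    rintro ⟨δ, hδ, γ, hγ, x, hx, x', hx', y, hy, y', hy', h1, h2⟩
    have huv : Relation.TransGen (LtRel B) u v :=
      Relation.TransGen.trans_right (rts hx).1
        ((Relation.TransGen.single ⟨δ, hδ, h1⟩).trans_left (rts hy).2)
    have hvu : Relation.TransGen (LtRel B) v u :=
      Relation.TransGen.trans_right (rts hy').1
        ((Relation.TransGen.single ⟨γ, hγ, h2⟩).trans_left (rts hx').2)
    have hv : v ∈ consClass B u ∩ consClass B v :=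
      ⟨Or.inr ⟨hvu, huv⟩, Or.inl rfl⟩
    simp [hdisj] at hv
  refine ⟨?_, key⟩
  by_contra h
  push_neg at h
  obtain ⟨⟨δ, hδ, x, hx, y, hy, h1⟩, ⟨γ, hγ, x', hx', y', hy', h2⟩⟩ := h
  exact key ⟨γ, hγ, δ, hδ, x', hx', x, hx, y', hy', y, hy, h2, h1⟩
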